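/- arXiv:2502.13378 — 3 statements merged into one kernel-verified Lean document; each statement's English description precedes it below -/
import Mathlib

section
/- The double integral for the Brownian coagulation kernel in the free molecule regime satisfies ∫₀^∞ ∫₀^∞ (1/η + 1/η₁)^{1/2} (η^{1/3} + η₁^{1/3})² e^{-η-η₁} dη dη₁ = 2·Γ(13/6)·(Γ(7/6)·Γ(1/2) + Γ(5/6)²)/Γ(5/3), where Γ is the Euler Gamma function. -/
open MeasureTheory Set

namespace Stmt5Aux

lemma int_gamma {a r : ℝ} (ha : 0 < a) (hr : 0 < r) :
    IntegrableOn (fun t : ℝ => t ^ (a - 1) * Real.exp (-(r * t))) (Ioi 0) := by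
  have h0 := Real.GammaIntegral_convergent ha
  have h1 : IntegrableOn (fun t : ℝ => Real.exp (-(r * t)) * (r * t) ^ (a - 1)) (Ioi 0) := by
    have := (integrableOn_Ioi_comp_mul_left_iff
      (fun s : ℝ => Real.exp (-s) * s ^ (a - 1)) 0 hr).2
    simpa using this (by simpa using h0)
  have h2 : IntegrableOn
      (fun t : ℝ => (r ^ (a - 1 : ℝ))⁻¹ * (Real.exp (-(r * t)) * (r * t) ^ (a - 1))) (Ioi 0) :=
    h1.const_mul ((r ^ (a - 1 : ℝ))⁻¹)
  apply h2.congr_fun ?_ measurableSet_Ioi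
  intro t ht
  have ht' : (0:ℝ) < t := ht
  show (r ^ (a - 1 : ℝ))⁻¹ * (Real.exp (-(r * t)) * (r * t) ^ (a - 1))
      = t ^ (a - 1) * Real.exp (-(r * t))
  rw [Real.mul_rpow hr.le ht'.le]
  field_simp [(Real.rpow_pos_of_pos hr (a-1)).ne']
  try ring

lemma beta_Ioo_int {a b : ℝ} (ha : 0 < a) (hb : 0 < b) :
    IntegrableOn (fun u : ℝ => u ^ (a - 1) * (1 - u) ^ (b - 1)) (Ioo 0 1) := by
  have h := (Complex.betaIntegral_convergent (u := (a : ℂ)) (v := (b : ℂ))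
    (by simpa) (by simpa)).1
  have h2 := ((h.mono_set Ioo_subset_Ioc_self).re)
  apply h2.congr
  filter_upwards [ae_restrict_mem measurableSet_Ioo] with u hu
  obtain ⟨h0, h1⟩ := hu
  have e1 : ((u : ℂ) ^ ((a : ℂ) - 1)) = ((u ^ (a - 1) : ℝ) : ℂ) := by
    rw [show ((a:ℂ) - 1) = ((a - 1 : ℝ) : ℂ) by push_cast; ring,
      ← Complex.ofReal_cpow h0.le]
  have e2 : ((1 - (u : ℂ)) ^ ((b : ℂ) - 1)) = (((1 - u) ^ (b - 1) : ℝ) : ℂ) := by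
    rw [show (1 - (u:ℂ)) = (((1 - u : ℝ)) : ℂ) by push_cast; ring,
      show ((b:ℂ) - 1) = ((b - 1 : ℝ) : ℂ) by push_cast; ring,
      ← Complex.ofReal_cpow (by linarith)]
  simp [e1, e2, ← Complex.ofReal_mul]

lemma beta_Ioo_eq {a b : ℝ} (ha : 0 < a) (hb : 0 < b) :
    ∫ u in Ioo (0:ℝ) 1, u ^ (a - 1) * (1 - u) ^ (b - 1)
      = Real.Gamma a * Real.Gamma b / Real.Gamma (a + b) := by
  have key := Complex.Gamma_mul_Gamma_eq_betaIntegral (s := (a : ℂ)) (t := (b : ℂ))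
    (by simpa) (by simpa)
  have hcoe : Complex.betaIntegral a b
      = ((∫ u in Ioo (0:ℝ) 1, u ^ (a - 1) * (1 - u) ^ (b - 1) : ℝ) : ℂ) := by
    rw [Complex.betaIntegral, intervalIntegral.integral_of_le zero_le_one,
      MeasureTheory.integral_Ioc_eq_integral_Ioo,
      setIntegral_congr_fun (f := fun u : ℝ => (u:ℂ) ^ ((a:ℂ) - 1) * (1 - (u:ℂ)) ^ ((b:ℂ) - 1))
        (g := fun u : ℝ => ((u ^ (a - 1) * (1 - u) ^ (b - 1) : ℝ) : ℂ))
        measurableSet_Ioo (fun u hu => ?_)]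
    · exact integral_ofReal
    obtain ⟨h0, h1⟩ := hu
    have e1 : ((u : ℂ) ^ ((a : ℂ) - 1)) = ((u ^ (a - 1) : ℝ) : ℂ) := by
      rw [show ((a:ℂ) - 1) = ((a - 1 : ℝ) : ℂ) by push_cast; ring,
      ← Complex.ofReal_cpow h0.le]
    have e2 : ((1 - (u : ℂ)) ^ ((b : ℂ) - 1)) = (((1 - u) ^ (b - 1) : ℝ) : ℂ) := by
      rw [show (1 - (u:ℂ)) = (((1 - u : ℝ)) : ℂ) by push_cast; ring,
        show ((b:ℂ) - 1) = ((b - 1 : ℝ) : ℂ) by push_cast; ring,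
        ← Complex.ofReal_cpow (by linarith : (0:ℝ) ≤ 1 - u)]
    simp [e1, e2, ← Complex.ofReal_mul]
  have hab : (0:ℝ) < a + b := by linarith
  have hΓ : Complex.Gamma ((a : ℂ) + (b : ℂ)) = ((Real.Gamma (a + b) : ℝ) : ℂ) := by
    rw [← Complex.ofReal_add, Complex.Gamma_ofReal]
  rw [Complex.Gamma_ofReal, Complex.Gamma_ofReal, hΓ, hcoe] at key
  have key' : Real.Gamma a * Real.Gamma b
      = Real.Gamma (a + b) * ∫ u in Ioo (0:ℝ) 1, u ^ (a - 1) * (1 - u) ^ (b - 1) := by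
    exact_mod_cast key
  rw [eq_div_iff (Real.Gamma_pos_of_pos hab).ne']
  linarith [key']

lemma image_eq : (fun u : ℝ => u / (1 - u)) '' (Ioo 0 1) = Ioi 0 := by
  ext x
  simp only [mem_image, mem_Ioo, mem_Ioi]
  constructor
  · rintro ⟨u, ⟨h0, h1⟩, rfl⟩
    exact div_pos h0 (by linarith)
  · intro hx
    refine ⟨x / (1 + x), ⟨by positivity, ?_⟩, ?_⟩
    · rw [div_lt_one (by linarith)]; linarith
    · have h1 : (1:ℝ) + x ≠ 0 := by positivity
      have h2 : 1 - x / (1 + x) = 1 / (1 + x) := by field_simp; ring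
      rw [h2]
      field_simp

lemma hasDeriv_aux {u : ℝ} (hu : u ∈ Ioo (0:ℝ) 1) :
    HasDerivWithinAt (fun u : ℝ => u / (1 - u)) (((1 - u) ^ 2)⁻¹) (Ioo 0 1) u := by
  have h1 : (1:ℝ) - u ≠ 0 := sub_ne_zero.mpr hu.2.ne'
  have := (hasDerivAt_id u).div ((hasDerivAt_const u (1:ℝ)).sub (hasDerivAt_id u)) h1
  convert this.hasDerivWithinAt using 1
  · rfl
  · rfl
  · funext v; simp
  · simp only [Pi.sub_apply, id]
    field_simp
    ring

lemma inj_aux : InjOn (fun u : ℝ => u / (1 - u)) (Ioo 0 1) := by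
  intro u hu v hv h
  have h1 : (1:ℝ) - u ≠ 0 := sub_ne_zero.mpr hu.2.ne'
  have h2 : (1:ℝ) - v ≠ 0 := sub_ne_zero.mpr hv.2.ne'
  field_simp at h
  linarith

lemma subst_pointwise {a b u : ℝ} (hu : u ∈ Ioo (0:ℝ) 1) :
    |((1 - u) ^ 2)⁻¹| • ((u / (1 - u)) ^ (a - 1) * (1 + u / (1 - u)) ^ (-(a + b)))
      = u ^ (a - 1) * (1 - u) ^ (b - 1) := by
  obtain ⟨h0, h1⟩ := hu
  have ht : (0:ℝ) < 1 - u := by linarith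
  have e0 : 1 + u / (1 - u) = (1 - u)⁻¹ := by field_simp; ring
  have e2 : ((1 - u) ^ 2)⁻¹ = (1 - u) ^ ((-2 : ℝ)) := by
    rw [show ((-2):ℝ) = -((2:ℕ):ℝ) by norm_num, Real.rpow_neg ht.le, Real.rpow_natCast]
  rw [smul_eq_mul, abs_of_pos (by positivity), e0, Real.div_rpow h0.le ht.le,
    Real.inv_rpow ht.le, Real.rpow_neg ht.le (a + b), inv_inv, e2,
    div_eq_mul_inv, ← Real.rpow_neg ht.le,
    show (b - 1 : ℝ) = -2 + (-(a - 1) + (a + b)) by ring]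
  simp only [Real.rpow_add ht]
  ring

lemma beta_Ioi_eq {a b : ℝ} (ha : 0 < a) (hb : 0 < b) :
    ∫ x in Ioi (0:ℝ), x ^ (a - 1) * (1 + x) ^ (-(a + b))
      = Real.Gamma a * Real.Gamma b / Real.Gamma (a + b) := by
  rw [← image_eq, integral_image_eq_integral_abs_deriv_smul measurableSet_Ioo
    (fun u hu => hasDeriv_aux hu) inj_aux, ← beta_Ioo_eq ha hb]
  exact setIntegral_congr_fun measurableSet_Ioo (fun u hu => subst_pointwise hu)

lemma beta_Ioi_int {a b : ℝ} (ha : 0 < a) (hb : 0 < b) :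
    IntegrableOn (fun x : ℝ => x ^ (a - 1) * (1 + x) ^ (-(a + b))) (Ioi 0) := by
  rw [← image_eq, integrableOn_image_iff_integrableOn_abs_deriv_smul measurableSet_Ioo
    (fun u hu => hasDeriv_aux hu) inj_aux]
  exact (beta_Ioo_int ha hb).congr_fun
    (fun u hu => (subst_pointwise hu).symm) measurableSet_Ioo

noncomputable def gg (x : ℝ) : ℝ := (1/x + 1) ^ (1/2 : ℝ) * (x ^ (1/3 : ℝ) + 1) ^ 2

noncomputable def φ (x t : ℝ) : ℝ :=
  t ^ ((13:ℝ)/6 - 1) * Real.exp (-((1 + x) * t)) * gg x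

lemma Q {x t : ℝ} (hx : 0 < x) (ht : 0 < t) :
    t * ((1/(t*x) + 1/t) ^ (1/2 : ℝ) * ((t*x) ^ (1/3 : ℝ) + t ^ (1/3 : ℝ)) ^ 2 *
      Real.exp (-(t*x) - t)) = φ x t := by
  unfold φ gg
  have h1x : (0:ℝ) ≤ 1/x + 1 := by positivity
  have e1 : 1/(t*x) + 1/t = t⁻¹ * (1/x + 1) := by field_simp
  have e2 : (t⁻¹ * (1/x + 1)) ^ (1/2 : ℝ) = t ^ (-(1/2) : ℝ) * (1/x + 1) ^ (1/2 : ℝ) := by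
    rw [Real.mul_rpow (by positivity) h1x, Real.inv_rpow ht.le, ← Real.rpow_neg ht.le]
  have e3 : ((t*x) ^ (1/3 : ℝ) + t ^ (1/3 : ℝ)) ^ 2 = t ^ (2/3 : ℝ) * (x ^ (1/3 : ℝ) + 1) ^ 2 := by
    rw [Real.mul_rpow ht.le hx.le,
      show t ^ (1/3:ℝ) * x ^ (1/3:ℝ) + t ^ (1/3:ℝ) = t ^ (1/3:ℝ) * (x ^ (1/3:ℝ) + 1) by ring,
      mul_pow]
    congr 1
    rw [← Real.rpow_natCast (t ^ (1/3:ℝ)) 2, ← Real.rpow_mul ht.le]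
    norm_num
  have e4 : Real.exp (-(t*x) - t) = Real.exp (-((1 + x) * t)) := by congr 1; ring
  rw [e1, e2, e3, e4, show ((13:ℝ)/6 - 1) = 1 + -(1/2 : ℝ) + (2/3 : ℝ) by norm_num]
  simp only [Real.rpow_add ht, Real.rpow_one]
  ring

lemma P {x : ℝ} (hx : 0 < x) :
    (1/(1 + x)) ^ ((13:ℝ)/6) * gg x
      = x ^ ((1:ℝ)/2 - 1) * (1 + x) ^ (-((1:ℝ)/2 + 7/6))
        + 2 * (x ^ ((5:ℝ)/6 - 1) * (1 + x) ^ (-((5:ℝ)/6 + 5/6)))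
        + x ^ ((7:ℝ)/6 - 1) * (1 + x) ^ (-((7:ℝ)/6 + 1/2)) := by
  unfold gg
  have hp : (0:ℝ) < 1 + x := by linarith
  have h1 : (1/x + 1 : ℝ) = (1 + x)/x := by field_simp
  have h3 : (1/(1 + x)) ^ ((13:ℝ)/6) = (1 + x) ^ (-(13/6) : ℝ) := by
    rw [one_div, Real.inv_rpow hp.le, ← Real.rpow_neg hp.le]
  have h4 : (x ^ (1/3:ℝ) + 1) ^ 2 = x ^ (2/3:ℝ) + 2 * x ^ (1/3:ℝ) + 1 := by
    have h : (x ^ (1/3:ℝ)) ^ 2 = x ^ (2/3:ℝ) := by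
      rw [← Real.rpow_natCast (x ^ (1/3:ℝ)) 2, ← Real.rpow_mul hx.le]; norm_num
    rw [add_sq, h]; ring
  rw [h1, h3, h4, Real.div_rpow hp.le hx.le,
    show ((1:ℝ)/2 - 1) = -(1/2 : ℝ) by norm_num,
    show (-((1:ℝ)/2 + 7/6)) = -(13/6 : ℝ) + (1/2 : ℝ) by norm_num,
    show ((5:ℝ)/6 - 1) = -(1/2 : ℝ) + (1/3 : ℝ) by norm_num,
    show (-((5:ℝ)/6 + 5/6)) = -(13/6 : ℝ) + (1/2 : ℝ) by norm_num,
    show ((7:ℝ)/6 - 1) = -(1/2 : ℝ) + (2/3 : ℝ) by norm_num,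
    show (-((7:ℝ)/6 + 1/2)) = -(13/6 : ℝ) + (1/2 : ℝ) by norm_num,
    show (1 + x) ^ ((1:ℝ)/2) / x ^ ((1:ℝ)/2) = (1 + x) ^ ((1:ℝ)/2) * x ^ (-(1/2) : ℝ) by
      rw [Real.rpow_neg hx.le, div_eq_mul_inv]]
  simp only [Real.rpow_add hp, Real.rpow_add hx]
  ring

lemma gg_nonneg {x : ℝ} (hx : 0 < x) : 0 ≤ gg x := by
  unfold gg
  have : (0:ℝ) < 1/x + 1 := by positivity
  positivity

lemma R {x : ℝ} (hx : 0 < x) :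
    ∫ t in Ioi (0:ℝ), φ x t
      = (1/(1 + x)) ^ ((13:ℝ)/6) * Real.Gamma (13/6) * gg x := by
  unfold φ
  have hp : (0:ℝ) < 1 + x := by linarith
  rw [integral_mul_const, Real.integral_rpow_mul_exp_neg_mul_Ioi (by norm_num : (0:ℝ) < 13/6) hp]

lemma phi_meas : Measurable (Function.uncurry φ) := by
  unfold Function.uncurry φ gg
  fun_prop

end Stmt5Aux

open Stmt5Aux in
/-- Double integral of the free-molecule-regime Brownian coagulation kernel:
`∫₀^∞∫₀^∞ (1/η + 1/η₁)^{1/2} (η^{1/3}+η₁^{1/3})² e^{-η-η₁} dη dη₁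
  = 2Γ(13/6)(Γ(7/6)Γ(1/2)+Γ(5/6)²)/Γ(5/3)`. -/
theorem stmt_5 :
    (∫ η₁ in Ioi (0:ℝ), ∫ η in Ioi (0:ℝ),
        (1/η + 1/η₁) ^ (1/2 : ℝ) * (η ^ (1/3 : ℝ) + η₁ ^ (1/3 : ℝ)) ^ 2 *
          Real.exp (-η - η₁))
      = 2 * Real.Gamma (13/6) *
          ((Real.Gamma (7/6) * Real.Gamma (1/2) + Real.Gamma (5/6) ^ 2) /
            Real.Gamma (5/3)) := by
  have hβ1 := beta_Ioi_int (a := 1/2) (b := 7/6) (by norm_num) (by norm_num)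
  have hβ2 := beta_Ioi_int (a := 5/6) (b := 5/6) (by norm_num) (by norm_num)
  have hβ3 := beta_Ioi_int (a := 7/6) (b := 1/2) (by norm_num) (by norm_num)
  -- step A: rewrite inner integral via substitution η = η₁ x
  have stepA : ∀ η₁ ∈ Ioi (0:ℝ),
      (∫ η in Ioi (0:ℝ), (1/η + 1/η₁) ^ (1/2 : ℝ) * (η ^ (1/3:ℝ) + η₁ ^ (1/3:ℝ)) ^ 2 *
        Real.exp (-η - η₁)) = ∫ x in Ioi (0:ℝ), φ x η₁ := by
    intro η₁ hη₁
    have hη : (0:ℝ) < η₁ := hη₁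
    have hsub := integral_comp_mul_left_Ioi
      (fun η => (1/η + 1/η₁) ^ (1/2 : ℝ) * (η ^ (1/3:ℝ) + η₁ ^ (1/3:ℝ)) ^ 2 *
        Real.exp (-η - η₁)) 0 hη
    rw [mul_zero] at hsub
    have h2 : (∫ η in Ioi (0:ℝ), (1/η + 1/η₁) ^ (1/2 : ℝ) *
          (η ^ (1/3:ℝ) + η₁ ^ (1/3:ℝ)) ^ 2 * Real.exp (-η - η₁))
        = η₁ * ∫ x in Ioi (0:ℝ),
            (1/(η₁*x) + 1/η₁) ^ (1/2 : ℝ) * ((η₁*x) ^ (1/3:ℝ) + η₁ ^ (1/3:ℝ)) ^ 2 *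
              Real.exp (-(η₁*x) - η₁) := by
      rw [hsub, smul_eq_mul, ← mul_assoc, mul_inv_cancel₀ hη.ne', one_mul]
    rw [h2, ← integral_const_mul]
    refine setIntegral_congr_fun measurableSet_Ioi (fun x hx => ?_)
    have hx' : (0:ℝ) < x := hx
    have := Q (x := x) (t := η₁) hx' hη
    calc η₁ * ((1/(η₁*x) + 1/η₁) ^ (1/2 : ℝ) * ((η₁*x) ^ (1/3:ℝ) + η₁ ^ (1/3:ℝ)) ^ 2 *
          Real.exp (-(η₁*x) - η₁))
        = η₁ * ((1/(η₁*x) + 1/η₁) ^ (1/2 : ℝ) * ((η₁*x) ^ (1/3:ℝ) + η₁ ^ (1/3:ℝ)) ^ 2 *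
          Real.exp (-(η₁*x) - η₁)) := rfl
      _ = φ x η₁ := this
  rw [setIntegral_congr_fun measurableSet_Ioi stepA]
  -- step B: Fubini
  have hint : Integrable (Function.uncurry φ)
      ((volume.restrict (Ioi (0:ℝ))).prod (volume.restrict (Ioi (0:ℝ)))) := by
    refine (integrable_prod_iff phi_meas.aestronglyMeasurable).2 ⟨?_, ?_⟩
    · filter_upwards [ae_restrict_mem measurableSet_Ioi] with x hx
      exact (int_gamma (by norm_num : (0:ℝ) < 13/6)
        (by simp only [mem_Ioi] at hx; linarith : (0:ℝ) < 1 + x)).mul_const (gg x)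
    · have hψ : IntegrableOn
          (fun x : ℝ => Real.Gamma (13/6) *
            (x ^ ((1:ℝ)/2 - 1) * (1 + x) ^ (-((1:ℝ)/2 + 7/6))
              + 2 * (x ^ ((5:ℝ)/6 - 1) * (1 + x) ^ (-((5:ℝ)/6 + 5/6)))
              + x ^ ((7:ℝ)/6 - 1) * (1 + x) ^ (-((7:ℝ)/6 + 1/2)))) (Ioi 0) :=
        (((hβ1.add (hβ2.const_mul 2)).add hβ3).const_mul _)
      apply hψ.congr
      filter_upwards [ae_restrict_mem measurableSet_Ioi] with x hx
      have hx' : (0:ℝ) < x := hx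
      have hnn : ∀ t ∈ Ioi (0:ℝ), ‖φ x t‖ = φ x t := by
        intro t ht
        have ht' : (0:ℝ) < t := ht
        refine Real.norm_of_nonneg ?_
        unfold φ
        have := gg_nonneg hx'
        positivity
      simp only [Function.uncurry_apply_pair]
      rw [setIntegral_congr_fun measurableSet_Ioi hnn, R hx', ← P hx']
      ring
  rw [← integral_integral_swap hint]
  -- step C: compute the inner Gamma integral
  have stepC : ∀ x ∈ Ioi (0:ℝ),
      (∫ t in Ioi (0:ℝ), φ x t)
        = Real.Gamma (13/6) *
            (x ^ ((1:ℝ)/2 - 1) * (1 + x) ^ (-((1:ℝ)/2 + 7/6))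
              + 2 * (x ^ ((5:ℝ)/6 - 1) * (1 + x) ^ (-((5:ℝ)/6 + 5/6)))
              + x ^ ((7:ℝ)/6 - 1) * (1 + x) ^ (-((7:ℝ)/6 + 1/2))) := by
    intro x hx
    have hx' : (0:ℝ) < x := hx
    rw [R hx', ← P hx']
    ring
  have hsum : Integrable (fun x : ℝ => x ^ ((1:ℝ)/2 - 1) * (1 + x) ^ (-((1:ℝ)/2 + 7/6))
      + 2 * (x ^ ((5:ℝ)/6 - 1) * (1 + x) ^ (-((5:ℝ)/6 + 5/6))))
      (volume.restrict (Ioi 0)) := hβ1.add (hβ2.const_mul 2)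
  rw [setIntegral_congr_fun measurableSet_Ioi stepC, integral_const_mul,
    integral_add hsum hβ3,
    integral_add hβ1 (hβ2.const_mul 2), integral_const_mul,
    beta_Ioi_eq (by norm_num : (0:ℝ) < 1/2) (by norm_num : (0:ℝ) < 7/6),
    beta_Ioi_eq (by norm_num : (0:ℝ) < 5/6) (by norm_num : (0:ℝ) < 5/6),
    beta_Ioi_eq (by norm_num : (0:ℝ) < 7/6) (by norm_num : (0:ℝ) < 1/2),
    show ((1:ℝ)/2 + 7/6) = 5/3 by norm_num, show ((5:ℝ)/6 + 5/6) = 5/3 by norm_num,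
    show ((7:ℝ)/6 + 1/2) = 5/3 by norm_num]
  ring
end

section
/- The double integral for the sedimentary coagulation kernel has the closed form ∫₀^∞ ∫₀^∞ (η^{1/3} + η₁^{1/3})³ |η^{1/3} − η₁^{1/3}| e^{-η-η₁} dη dη₁ = 6·Γ(10/3) · ∫₀¹ t²(1−t) / ((1 − t + t²)³ (1 + t³)^{1/3}) dt, where Γ is the Euler Gamma function. -/
open MeasureTheory Set Real

noncomputable section SedimentaryAux

private def Fker (η η₁ : ℝ) : ℝ :=
  (η ^ (1/3 : ℝ) + η₁ ^ (1/3 : ℝ)) ^ 3 * |η ^ (1/3 : ℝ) - η₁ ^ (1/3 : ℝ)| * Real.exp (-η - η₁)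
private lemma cont_cbrt : Continuous fun x : ℝ => x ^ (1/3:ℝ) :=
  Real.continuous_rpow_const (by norm_num)
private lemma Fker_cont : Continuous fun p : ℝ × ℝ => Fker p.2 p.1 := by
  unfold Fker
  have h1 := cont_cbrt.comp (continuous_snd : Continuous fun p : ℝ × ℝ => p.2)
  have h2 := cont_cbrt.comp (continuous_fst : Continuous fun p : ℝ × ℝ => p.1)
  exact (((h1.add h2).pow 3).mul ((h1.sub h2).abs)).mul
    ((continuous_snd.neg.sub continuous_fst).rexp)

private lemma pow4_rpow {x : ℝ} (hx : 0 ≤ x) : (x ^ (1/3:ℝ)) ^ 4 = x ^ (4/3:ℝ) := by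
  rw [← Real.rpow_natCast (x ^ (1/3:ℝ)) 4, ← Real.rpow_mul hx]
  norm_num

private lemma Fker_prod_integrable :
    Integrable (Function.uncurry fun η₁ η => Fker η η₁)
      ((volume.restrict (Ioi (0:ℝ))).prod (volume.restrict (Ioi (0:ℝ)))) := by
  have hexp : IntegrableOn (fun x : ℝ => Real.exp (-x)) (Ioi 0) := by
    simpa using exp_neg_integrableOn_Ioi 0 one_pos
  have hgam : IntegrableOn (fun x : ℝ => Real.exp (-x) * x ^ (4/3:ℝ)) (Ioi 0) := by
    have := Real.GammaIntegral_convergent (show (0:ℝ) < 7/3 by norm_num)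
    norm_num at this; exact this
  have hg : Integrable
      (fun p : ℝ × ℝ => 8 * ((Real.exp (-p.1) * p.1 ^ (4/3:ℝ)) * Real.exp (-p.2)
          + Real.exp (-p.1) * (Real.exp (-p.2) * p.2 ^ (4/3:ℝ))))
      ((volume.restrict (Ioi (0:ℝ))).prod (volume.restrict (Ioi (0:ℝ)))) :=
    ((Integrable.mul_prod hgam hexp).add (Integrable.mul_prod hexp hgam)).const_mul 8
  refine hg.mono' (Fker_cont.aestronglyMeasurable) ?_
  rw [Measure.prod_restrict]
  filter_upwards [ae_restrict_mem (measurableSet_Ioi.prod measurableSet_Ioi)] with p hp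
  obtain ⟨hp1, hp2⟩ := hp
  have hp1 : (0:ℝ) ≤ p.1 := le_of_lt hp1
  have hp2 : (0:ℝ) ≤ p.2 := le_of_lt hp2
  set a := p.2 ^ (1/3:ℝ) with ha_def
  set b := p.1 ^ (1/3:ℝ) with hb_def
  have ha : 0 ≤ a := Real.rpow_nonneg hp2 _
  have hb : 0 ≤ b := Real.rpow_nonneg hp1 _
  have hE : (0:ℝ) < Real.exp (-p.2 - p.1) := Real.exp_pos _
  have habs : |a - b| ≤ a + b := abs_sub_le_iff.mpr ⟨by linarith, by linarith⟩ |>.trans_eq rfl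
  have key : Fker p.2 p.1 ≤ 8 * (a^4 + b^4) * Real.exp (-p.2 - p.1) := by
    have h1 : Fker p.2 p.1 ≤ (a+b)^3 * (a+b) * Real.exp (-p.2 - p.1) := by
      unfold Fker
      gcongr
    have h2 : (a+b)^3 * (a+b) = (a+b)^4 := by ring
    have h3 : (a+b)^4 ≤ 8 * (a^4 + b^4) := by
      nlinarith [sq_nonneg (a - b), sq_nonneg (a + b), sq_nonneg (a^2 - b^2), sq_nonneg (a*b)]
    calc Fker p.2 p.1 ≤ (a+b)^4 * Real.exp (-p.2 - p.1) := by rw [← h2]; exact h1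
      _ ≤ 8 * (a^4 + b^4) * Real.exp (-p.2 - p.1) := by gcongr
  have hnn : 0 ≤ Fker p.2 p.1 := by
    unfold Fker
    have := Real.rpow_nonneg hp1 (1/3:ℝ)
    have := Real.rpow_nonneg hp2 (1/3:ℝ)
    positivity
  have hexpsplit : Real.exp (-p.2 - p.1) = Real.exp (-p.1) * Real.exp (-p.2) := by
    rw [← Real.exp_add]; ring_nf
  rw [Function.uncurry, Real.norm_eq_abs, abs_of_nonneg hnn]
  calc Fker p.2 p.1 ≤ 8 * (a^4 + b^4) * Real.exp (-p.2 - p.1) := key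
    _ = 8 * ((Real.exp (-p.1) * p.1 ^ (4/3:ℝ)) * Real.exp (-p.2)
          + Real.exp (-p.1) * (Real.exp (-p.2) * p.2 ^ (4/3:ℝ))) := by
        rw [hexpsplit, ha_def, hb_def, pow4_rpow hp1, pow4_rpow hp2]; ring
private lemma Fker_scale {η₁ σ : ℝ} (hη₁ : 0 < η₁) (hσ : 0 < σ) :
    η₁ * Fker (η₁ * σ) η₁
      = (σ ^ (1/3:ℝ) + 1) ^ 3 * |σ ^ (1/3:ℝ) - 1| *
          (η₁ ^ ((10:ℝ)/3 - 1) * Real.exp (-((1 + σ) * η₁))) := by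
  unfold Fker
  rw [Real.mul_rpow hη₁.le hσ.le]
  set c := η₁ ^ (1/3:ℝ) with hc_def
  set s := σ ^ (1/3:ℝ) with hs_def
  have hc : 0 < c := Real.rpow_pos_of_pos hη₁ _
  have hc4 : η₁ * c ^ 4 = η₁ ^ ((10:ℝ)/3 - 1) := by
    rw [hc_def, pow4_rpow hη₁.le,
      show ((10:ℝ)/3 - 1) = 1 + 4/3 by norm_num, Real.rpow_add hη₁, Real.rpow_one]
  rw [show c * s - c = c * (s - 1) by ring, abs_mul, abs_of_nonneg hc.le,
    show -(η₁ * σ) - η₁ = -((1 + σ) * η₁) by ring]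
  calc η₁ * ((c * s + c) ^ 3 * (c * |s - 1|) * Real.exp (-((1 + σ) * η₁)))
      = (s + 1) ^ 3 * |s - 1| * ((η₁ * c ^ 4) * Real.exp (-((1 + σ) * η₁))) := by ring
    _ = (s + 1) ^ 3 * |s - 1| * (η₁ ^ ((10:ℝ)/3 - 1) * Real.exp (-((1 + σ) * η₁))) := by
        rw [hc4]

private lemma Fker_nonneg {η η₁ : ℝ} (hη : 0 ≤ η) (hη₁ : 0 ≤ η₁) : 0 ≤ Fker η η₁ := by
  unfold Fker
  have := Real.rpow_nonneg hη (1/3:ℝ)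
  have := Real.rpow_nonneg hη₁ (1/3:ℝ)
  positivity

private lemma Fker_apply (η η₁ : ℝ) :
    (η ^ (1/3 : ℝ) + η₁ ^ (1/3 : ℝ)) ^ 3 * |η ^ (1/3 : ℝ) - η₁ ^ (1/3 : ℝ)| *
      Real.exp (-η - η₁) = Fker η η₁ := rfl

attribute [irreducible] Fker

private lemma inner_subst {η₁ : ℝ} (hη₁ : 0 < η₁) :
    ∫ η in Ioi (0:ℝ), Fker η η₁ = ∫ σ in Ioi (0:ℝ), η₁ * Fker (η₁ * σ) η₁ := by
  have h := MeasureTheory.integral_comp_mul_left_Ioi (fun η => Fker η η₁) 0 hη₁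
  rw [mul_zero] at h
  rw [integral_const_mul, h, smul_eq_mul]
  field_simp

private lemma step2 {σ : ℝ} (hσ : 0 < σ) :
    ∫ η₁ in Ioi (0:ℝ), η₁ * Fker (η₁ * σ) η₁
      = (σ ^ (1/3:ℝ) + 1) ^ 3 * |σ ^ (1/3:ℝ) - 1| *
          ((1 / (1 + σ)) ^ ((10:ℝ)/3) * Real.Gamma (10/3)) := by
  rw [setIntegral_congr_fun measurableSet_Ioi (fun η₁ hη₁ => Fker_scale hη₁ hσ),
    integral_const_mul, Real.integral_rpow_mul_exp_neg_mul_Ioi (by norm_num) (by linarith)]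
private lemma H_cont : Continuous fun p : ℝ × ℝ => p.1 * Fker (p.1 * p.2) p.1 := by
  have : Continuous fun p : ℝ × ℝ => Fker (p.1 * p.2) p.1 :=
    Fker_cont.comp (continuous_fst.prodMk (continuous_fst.mul continuous_snd))
  exact continuous_fst.mul this

private lemma H_slice_integrable {η₁ : ℝ} (hη₁ : 0 < η₁)
    (h : IntegrableOn (fun η => Fker η η₁) (Ioi 0)) :
    IntegrableOn (fun σ => η₁ * Fker (η₁ * σ) η₁) (Ioi 0) := by
  have h2 := (integrableOn_Ioi_comp_mul_left_iff (fun η => Fker η η₁) 0 hη₁)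
  rw [mul_zero] at h2
  exact (h2.mpr h).const_mul η₁

private lemma norm_inner_eq {η₁ : ℝ} (hη₁ : 0 < η₁) :
    (∫ σ in Ioi (0:ℝ), ‖η₁ * Fker (η₁ * σ) η₁‖)
      = ∫ η in Ioi (0:ℝ), ‖Fker η η₁‖ := by
  have e1 : (∫ σ in Ioi (0:ℝ), ‖η₁ * Fker (η₁ * σ) η₁‖)
      = ∫ σ in Ioi (0:ℝ), η₁ * Fker (η₁ * σ) η₁ := by
    refine setIntegral_congr_fun measurableSet_Ioi (fun σ hσ => ?_)
    have : 0 ≤ η₁ * Fker (η₁ * σ) η₁ :=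
      mul_nonneg hη₁.le (Fker_nonneg (mul_nonneg hη₁.le (le_of_lt hσ)) hη₁.le)
    rw [Real.norm_eq_abs, abs_of_nonneg this]
  have e2 : (∫ η in Ioi (0:ℝ), ‖Fker η η₁‖) = ∫ η in Ioi (0:ℝ), Fker η η₁ := by
    refine setIntegral_congr_fun measurableSet_Ioi (fun η hη => ?_)
    rw [Real.norm_eq_abs, abs_of_nonneg (Fker_nonneg (le_of_lt hη) hη₁.le)]
  rw [e1, e2, inner_subst hη₁]

private lemma H_prod_integrable :
    Integrable (Function.uncurry fun η₁ σ => η₁ * Fker (η₁ * σ) η₁)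
      ((volume.restrict (Ioi (0:ℝ))).prod (volume.restrict (Ioi (0:ℝ)))) := by
  have : Integrable (fun p : ℝ × ℝ => p.1 * Fker (p.1 * p.2) p.1)
      ((volume.restrict (Ioi (0:ℝ))).prod (volume.restrict (Ioi (0:ℝ)))) := by
    rw [integrable_prod_iff (H_cont.aestronglyMeasurable)]
    constructor
    · filter_upwards [Fker_prod_integrable.prod_right_ae, ae_restrict_mem measurableSet_Ioi]
        with η₁ hint hη₁
      exact H_slice_integrable hη₁ hint
    · refine (Fker_prod_integrable.integral_norm_prod_left).congr ?_
      filter_upwards [ae_restrict_mem measurableSet_Ioi] with η₁ hη₁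
      exact (norm_inner_eq hη₁).symm
  exact this

private lemma step1 :
    (∫ η₁ in Ioi (0:ℝ), ∫ η in Ioi (0:ℝ), Fker η η₁)
      = ∫ σ in Ioi (0:ℝ), ∫ η₁ in Ioi (0:ℝ), η₁ * Fker (η₁ * σ) η₁ := by
  rw [setIntegral_congr_fun measurableSet_Ioi
    (fun η₁ (hη₁ : η₁ ∈ Ioi (0:ℝ)) => inner_subst hη₁)]
  exact integral_integral_swap H_prod_integrable


private def Gfun (σ : ℝ) : ℝ :=
  (σ ^ (1/3:ℝ) + 1) ^ 3 * |σ ^ (1/3:ℝ) - 1| * (1/(1+σ)) ^ ((10:ℝ)/3)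

private def phi (x : ℝ) : ℝ := (3 * x ^ ((3:ℝ) - 1)) • Gfun (x ^ (3:ℝ))

private def Wfun (x : ℝ) : ℝ :=
  3 * x^2 * (1+x)^3 * (1-x) * ((1+x^3) ^ ((10:ℝ)/3))⁻¹

private lemma rpow_three {x : ℝ} : x ^ (3:ℝ) = x ^ 3 := by
  rw [show (3:ℝ) = ((3:ℕ):ℝ) by norm_num, Real.rpow_natCast]

private lemma rpow_two' {x : ℝ} : x ^ (2:ℝ) = x ^ 2 := by
  rw [show (2:ℝ) = ((2:ℕ):ℝ) by norm_num, Real.rpow_natCast]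

private lemma cbrt_cube {x : ℝ} (hx : 0 ≤ x) : (x ^ 3 : ℝ) ^ (1/3:ℝ) = x := by
  rw [← Real.rpow_natCast x 3, ← Real.rpow_mul hx]
  norm_num

private lemma pow4_rpow' {x : ℝ} (hx : 0 ≤ x) : (x ^ (1/3:ℝ)) ^ 4 = x ^ (4/3:ℝ) := by
  rw [← Real.rpow_natCast (x ^ (1/3:ℝ)) 4, ← Real.rpow_mul hx]; norm_num

-- continuity of Gfun on Ioi 0
private lemma Gfun_contOn : ContinuousOn Gfun (Ioi (0:ℝ)) := by
  have hc : Continuous fun σ : ℝ => (σ ^ (1/3:ℝ) + 1) ^ 3 * |σ ^ (1/3:ℝ) - 1| := by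
    have h := Real.continuous_rpow_const (show (0:ℝ) ≤ 1/3 by norm_num)
    exact ((h.add continuous_const).pow 3).mul ((h.sub continuous_const).abs)
  refine (hc.continuousOn).mul ?_
  refine ContinuousOn.rpow_const ?_ (fun x hx => Or.inl ?_)
  · exact continuousOn_const.div ((continuous_const.add continuous_id).continuousOn)
      (fun x hx => by simp at hx; positivity)
  · simp only [mem_Ioi] at hx
    positivity

private lemma majorant_integrable :
    IntegrableOn (fun σ : ℝ => 16 * ((1+σ) ^ (-2:ℝ))) (Ioi (0:ℝ)) := by
  have hmeas : ContinuousOn (fun σ : ℝ => 16 * ((1+σ) ^ (-2:ℝ))) (Ioi (0:ℝ)) := by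
    refine continuousOn_const.mul (ContinuousOn.rpow_const ?_ (fun x hx => Or.inl ?_))
    · exact (continuous_const.add continuous_id).continuousOn
    · simp only [mem_Ioi] at hx; positivity
  have h1 : IntegrableOn (fun σ : ℝ => 16 * ((1+σ) ^ (-2:ℝ))) (Ioc (0:ℝ) 1) := by
    refine Integrable.mono' (g := fun _ => (16:ℝ))
      (integrableOn_const measure_Ioc_lt_top.ne) ?_ ?_
    · exact (hmeas.mono Ioc_subset_Ioi_self).aestronglyMeasurable measurableSet_Ioc
    · filter_upwards [ae_restrict_mem measurableSet_Ioc] with σ hσ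
      have h0 : (0:ℝ) < σ := hσ.1
      have hle : (1+σ) ^ (-2:ℝ) ≤ (1:ℝ) := by
        have := Real.rpow_le_rpow_of_nonpos (show (0:ℝ) < 1 by norm_num)
          (show (1:ℝ) ≤ 1 + σ by linarith) (show (-2:ℝ) ≤ 0 by norm_num)
        simpa using this
      rw [Real.norm_eq_abs, abs_of_nonneg (by positivity)]
      show 16 * ((1+σ) ^ (-2:ℝ)) ≤ 16
      nlinarith
  have h2 : IntegrableOn (fun σ : ℝ => 16 * ((1+σ) ^ (-2:ℝ))) (Ioi (1:ℝ)) := by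
    refine Integrable.mono' (((integrableOn_Ioi_rpow_of_lt (show (-2:ℝ) < -1 by norm_num)
      one_pos)).const_mul 16) ?_ ?_
    · exact (hmeas.mono (Ioi_subset_Ioi zero_le_one)).aestronglyMeasurable measurableSet_Ioi
    · filter_upwards [ae_restrict_mem measurableSet_Ioi] with σ hσ
      have h1σ : (1:ℝ) < σ := hσ
      have hle : (1+σ) ^ (-2:ℝ) ≤ σ ^ (-2:ℝ) :=
        Real.rpow_le_rpow_of_nonpos (by linarith) (by linarith) (by norm_num)
      rw [Real.norm_eq_abs, abs_of_nonneg (by positivity)]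
      nlinarith
  have := h1.union h2
  rwa [Ioc_union_Ioi_eq_Ioi zero_le_one] at this

private lemma Gfun_integrable : IntegrableOn Gfun (Ioi (0:ℝ)) := by
  refine Integrable.mono' majorant_integrable
    (Gfun_contOn.aestronglyMeasurable measurableSet_Ioi) ?_
  filter_upwards [ae_restrict_mem measurableSet_Ioi] with σ hσ
  have h0 : (0:ℝ) < σ := hσ
  set s := σ ^ (1/3:ℝ) with hs_def
  have hs : 0 ≤ s := Real.rpow_nonneg h0.le _
  have h1σ : (0:ℝ) < 1 + σ := by linarith
  have hGnn : 0 ≤ Gfun σ := by unfold Gfun; positivity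
  rw [Real.norm_eq_abs, abs_of_nonneg hGnn]
  have hb : s + 1 ≤ 2 * (1+σ) ^ (1/3:ℝ) := by
    have e1 : s ≤ (1+σ) ^ (1/3:ℝ) :=
      Real.rpow_le_rpow h0.le (by linarith) (by norm_num)
    have e2 : (1:ℝ) ≤ (1+σ) ^ (1/3:ℝ) := Real.one_le_rpow (by linarith) (by norm_num)
    linarith
  have habs : |s - 1| ≤ s + 1 := abs_sub_le_iff.mpr ⟨by linarith, by linarith⟩
  have hG4 : Gfun σ ≤ (s+1)^4 * (1/(1+σ)) ^ ((10:ℝ)/3) := by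
    unfold Gfun
    rw [← hs_def]
    have : (s + 1) ^ 3 * |s - 1| ≤ (s+1)^4 := by
      calc (s + 1) ^ 3 * |s - 1| ≤ (s + 1) ^ 3 * (s + 1) := by gcongr
        _ = (s+1)^4 := by ring
    have hp : (0:ℝ) ≤ (1/(1+σ)) ^ ((10:ℝ)/3) := by positivity
    exact mul_le_mul_of_nonneg_right this hp
  have hpow : (s+1)^4 ≤ 16 * (1+σ) ^ ((4:ℝ)/3) := by
    calc (s+1)^4 ≤ (2 * (1+σ) ^ (1/3:ℝ))^4 := by
          have : (0:ℝ) ≤ s + 1 := by linarith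
          gcongr
      _ = 16 * ((1+σ) ^ (1/3:ℝ))^4 := by ring
      _ = 16 * (1+σ) ^ ((4:ℝ)/3) := by rw [pow4_rpow' h1σ.le]
  have hsplit : (1/(1+σ)) ^ ((10:ℝ)/3) = ((1+σ) ^ ((10:ℝ)/3))⁻¹ := by
    rw [one_div, ← Real.rpow_neg_one (1+σ), ← Real.rpow_mul h1σ.le, ← Real.rpow_neg h1σ.le]
    norm_num
  calc Gfun σ ≤ (s+1)^4 * (1/(1+σ)) ^ ((10:ℝ)/3) := hG4
    _ ≤ 16 * (1+σ) ^ ((4:ℝ)/3) * (1/(1+σ)) ^ ((10:ℝ)/3) := by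
        have : (0:ℝ) ≤ (1/(1+σ)) ^ ((10:ℝ)/3) := by positivity
        exact mul_le_mul_of_nonneg_right hpow this
    _ = 16 * ((1+σ) ^ (-2:ℝ)) := by
        rw [hsplit, mul_assoc]
        congr 1
        rw [← Real.rpow_neg h1σ.le, ← Real.rpow_add h1σ]
        norm_num
private lemma phi_integrable : IntegrableOn phi (Ioi (0:ℝ)) := by
  have h := (integrableOn_Ioi_comp_rpow_iff Gfun (show (3:ℝ) ≠ 0 by norm_num)).mpr
    Gfun_integrable
  rw [show |(3:ℝ)| = 3 by norm_num] at h
  exact h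

private lemma integral_phi : ∫ x in Ioi (0:ℝ), phi x = ∫ σ in Ioi (0:ℝ), Gfun σ :=
  integral_comp_rpow_Ioi_of_pos (by norm_num)

private lemma phi_eq_W {t : ℝ} (h0 : 0 < t) (h1 : t ≤ 1) : phi t = Wfun t := by
  unfold phi Gfun Wfun
  rw [rpow_three, show ((3:ℝ) - 1) = (2:ℝ) by norm_num, rpow_two', cbrt_cube h0.le,
    abs_of_nonpos (by linarith), one_div, Real.inv_rpow (by positivity), smul_eq_mul]
  ring

private lemma inv_phi_eq_W {x : ℝ} (h0 : 0 < x) (h1 : x < 1) :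
    |(-(x^2)⁻¹)| * phi x⁻¹ = Wfun x := by
  have hx0 : x ≠ 0 := ne_of_gt h0
  unfold phi Gfun Wfun
  rw [rpow_three, show ((3:ℝ) - 1) = (2:ℝ) by norm_num, rpow_two',
    cbrt_cube (inv_nonneg.mpr h0.le), inv_pow x 3]
  have h2 : (1:ℝ) ≤ x⁻¹ := (one_le_inv₀ h0).mpr h1.le
  have habs : |x⁻¹ - 1| = (1 - x)/x := by
    rw [abs_of_nonneg (by linarith)]
    field_simp
  have hfrac : 1/(1 + (x^3)⁻¹) = x^3/(1+x^3) := by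
    rw [div_eq_div_iff (by positivity) (by positivity)]
    field_simp
    ring
  have hx10 : ((x^3:ℝ)) ^ ((10:ℝ)/3) = x^10 := by
    rw [← Real.rpow_natCast x 3, ← Real.rpow_mul h0.le,
      show ((3:ℕ):ℝ) * ((10:ℝ)/3) = ((10:ℕ):ℝ) by push_cast; ring, Real.rpow_natCast]
  rw [habs, hfrac, Real.div_rpow (by positivity) (by positivity), hx10, smul_eq_mul,
    abs_neg, abs_of_nonneg (by positivity)]
  have hd : ((1:ℝ)+x^3) ^ ((10:ℝ)/3) ≠ 0 := by positivity
  field_simp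

private lemma W_eq {t : ℝ} (h0 : 0 < t) (h1 : t ≤ 1) :
    Wfun t = 3 * (t^2*(1-t)/((1-t+t^2)^3*(1+t^3) ^ (1/3:ℝ))) := by
  have hq : (0:ℝ) < 1 - t + t^2 := by nlinarith
  have ht3 : (0:ℝ) < 1 + t^3 := by positivity
  have hc : (0:ℝ) < (1+t^3) ^ (1/3:ℝ) := Real.rpow_pos_of_pos ht3 _
  have h1t : (0:ℝ) < 1 + t := by linarith
  have hsplit : (1+t^3) ^ ((10:ℝ)/3) = ((1+t)*(1-t+t^2))^3 * (1+t^3) ^ (1/3:ℝ) := by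
    rw [show ((10:ℝ)/3) = ((3:ℕ):ℝ) + 1/3 by norm_num, Real.rpow_add ht3,
      Real.rpow_natCast]
    congr 1
    ring
  unfold Wfun
  rw [hsplit]
  field_simp

private lemma inv_image : (fun y : ℝ => y⁻¹) '' Ioo 0 1 = Ioi (1:ℝ) := by
  ext y
  constructor
  · rintro ⟨x, ⟨hx0, hx1⟩, rfl⟩
    exact (one_lt_inv₀ hx0).mpr hx1
  · intro hy
    have hy1 : (1:ℝ) < y := hy
    have hy0 : (0:ℝ) < y := lt_trans one_pos hy1
    exact ⟨y⁻¹, ⟨inv_pos.mpr hy0, inv_lt_one_of_one_lt₀ hy1⟩, inv_inv y⟩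

private lemma inv_subst :
    ∫ x in Ioi (1:ℝ), phi x = ∫ x in Ioo (0:ℝ) 1, |(-(x^2)⁻¹)| * phi x⁻¹ := by
  have hderiv : ∀ x ∈ Ioo (0:ℝ) 1,
      HasDerivWithinAt (fun y : ℝ => y⁻¹) (-(x^2)⁻¹) (Ioo 0 1) x :=
    fun x hx => (hasDerivAt_inv (ne_of_gt hx.1)).hasDerivWithinAt
  have hinj : InjOn (fun y : ℝ => y⁻¹) (Ioo 0 1) := fun a _ b _ h => inv_injective h
  have h := integral_image_eq_integral_abs_deriv_smul measurableSet_Ioo hderiv hinj phi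
  rw [inv_image] at h
  simpa [smul_eq_mul] using h

private lemma Gfun_final :
    ∫ σ in Ioi (0:ℝ), Gfun σ
      = 6 * ∫ t in (0:ℝ)..1, t^2*(1-t)/((1-t+t^2)^3*(1+t^3) ^ (1/3:ℝ)) := by
  rw [← integral_phi, ← Ioc_union_Ioi_eq_Ioi (zero_le_one : (0:ℝ) ≤ 1),
    setIntegral_union (Ioc_disjoint_Ioi le_rfl) measurableSet_Ioi
      (phi_integrable.mono_set Ioc_subset_Ioi_self)
      (phi_integrable.mono_set (Ioi_subset_Ioi zero_le_one)),
    inv_subst]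
  have e1 : ∫ x in Ioc (0:ℝ) 1, phi x
      = ∫ x in Ioo (0:ℝ) 1, 3 * (x^2*(1-x)/((1-x+x^2)^3*(1+x^3) ^ (1/3:ℝ))) := by
    rw [integral_Ioc_eq_integral_Ioo]
    exact setIntegral_congr_fun measurableSet_Ioo
      (fun x hx => by rw [phi_eq_W hx.1 hx.2.le, W_eq hx.1 hx.2.le])
  have e2 : ∫ x in Ioo (0:ℝ) 1, |(-(x^2)⁻¹)| * phi x⁻¹
      = ∫ x in Ioo (0:ℝ) 1, 3 * (x^2*(1-x)/((1-x+x^2)^3*(1+x^3) ^ (1/3:ℝ))) := by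
    exact setIntegral_congr_fun measurableSet_Ioo
      (fun x hx => by rw [inv_phi_eq_W hx.1 hx.2, W_eq hx.1 hx.2.le])
  rw [e1, e2, intervalIntegral.integral_of_le zero_le_one, integral_Ioc_eq_integral_Ioo,
    integral_const_mul]
  ring

end SedimentaryAux

/-- Closed form of the sedimentary coagulation double integral:
`∫₀^∞∫₀^∞ (η^{1/3}+η₁^{1/3})³|η^{1/3}−η₁^{1/3}| e^{-η-η₁} dη dη₁
  = 6Γ(10/3) ∫₀¹ t²(1−t)/((1−t+t²)³(1+t³)^{1/3}) dt`. -/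
theorem stmt_11 :
    (∫ η₁ in Ioi (0:ℝ), ∫ η in Ioi (0:ℝ),
        (η ^ (1/3 : ℝ) + η₁ ^ (1/3 : ℝ)) ^ 3 * |η ^ (1/3 : ℝ) - η₁ ^ (1/3 : ℝ)| *
          Real.exp (-η - η₁))
      = 6 * Real.Gamma (10/3) *
          ∫ t in (0:ℝ)..1,
            t ^ 2 * (1 - t) / ((1 - t + t ^ 2) ^ 3 * (1 + t ^ 3) ^ (1/3 : ℝ)) := by
  simp only [Fker_apply]
  calc (∫ η₁ in Ioi (0:ℝ), ∫ η in Ioi (0:ℝ), Fker η η₁)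
      = ∫ σ in Ioi (0:ℝ), ∫ η₁ in Ioi (0:ℝ), η₁ * Fker (η₁ * σ) η₁ := step1
      _ = ∫ σ in Ioi (0:ℝ), Gfun σ * Real.Gamma (10/3) := by
          refine setIntegral_congr_fun measurableSet_Ioi (fun σ hσ => ?_)
          rw [step2 hσ]
          unfold Gfun
          ring
      _ = (∫ σ in Ioi (0:ℝ), Gfun σ) * Real.Gamma (10/3) := integral_mul_const _ _
      _ = 6 * Real.Gamma (10/3) *
            ∫ t in (0:ℝ)..1,
              t ^ 2 * (1 - t) / ((1 - t + t ^ 2) ^ 3 * (1 + t ^ 3) ^ (1/3 : ℝ)) := by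
          rw [Gfun_final]
          ring
end

section
/- The closed-form value of the sedimentary-coagulation double integral agrees with 2.58940496 to nine significant digits: |6·Γ(10/3)·∫₀¹ t²(1−t)/((1−t+t²)³(1+t³)^{1/3}) dt − 2.58940496| < 5·10⁻⁹. -/
open MeasureTheory

open Finset Set Real



noncomputable def S (n : ℕ) (x : ℝ) : ℝ := ∑ k ∈ Finset.range n, (-x)^k / k.factorial

lemma S_hasDerivAt (n : ℕ) (x : ℝ) :
    HasDerivAt (S (n+1)) (-(S n x)) x := by
  have h : ∀ k ∈ Finset.range (n+1), HasDerivAt (fun x : ℝ => (-x)^k / k.factorial)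
      ((k : ℝ) * (-x)^(k-1) * (-1) / k.factorial) x := by
    intro k _
    exact (((hasDerivAt_neg x).pow k).div_const _)
  have h2 := HasDerivAt.fun_sum h
  have : S (n+1) = fun y : ℝ => ∑ k ∈ Finset.range (n+1), (-y)^k / k.factorial := rfl
  rw [this]
  refine h2.congr_deriv (Eq.symm ?_)
  rw [Finset.sum_range_succ']
  simp only [Nat.cast_zero, pow_zero, zero_mul, zero_div, add_zero]
  rw [S, neg_eq_iff_eq_neg, ← Finset.sum_neg_distrib]
  apply Finset.sum_congr rfl
  intro k _
  push_cast [Nat.factorial_succ]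
  have hk : (k:ℝ) + 1 ≠ 0 := by positivity
  have hf : (k.factorial:ℝ) ≠ 0 := by positivity
  field_simp

lemma S_zero_eval (n : ℕ) : S (n+1) 0 = 1 := by
  rw [S, Finset.sum_range_succ']
  simp

lemma exp_neg_sign (n : ℕ) : ∀ x : ℝ, 0 ≤ x →
    0 ≤ (-1:ℝ)^n * (Real.exp (-x) - S n x) := by
  induction n with
  | zero =>
    intro x _
    simp [S, Real.exp_nonneg]
  | succ n ih =>
    intro x hx
    set g : ℝ → ℝ := fun y => (-1:ℝ)^(n+1) * (Real.exp (-y) - S (n+1) y) with hg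
    have hder : ∀ y : ℝ, HasDerivAt g ((-1:ℝ)^n * (Real.exp (-y) - S n y)) y := by
      intro y
      have h1 : HasDerivAt (fun y : ℝ => Real.exp (-y)) (-Real.exp (-y)) y := by
        simpa [Function.comp_def] using (Real.hasDerivAt_exp (-y)).comp y (hasDerivAt_neg y)
      have h2 := (h1.sub (S_hasDerivAt n y)).const_mul ((-1:ℝ)^(n+1))
      refine h2.congr_deriv (Eq.symm ?_)
      ring
    have hmono : MonotoneOn g (Set.Ici 0) := by
      apply monotoneOn_of_deriv_nonneg (convex_Ici 0)
      · exact fun y _ => ((hder y).continuousAt).continuousWithinAt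
      · exact fun y _ => ((hder y).differentiableAt).differentiableWithinAt
      · intro y hy
        rw [(hder y).deriv]
        exact ih y (le_of_lt (by simpa using hy))
    have h0 : g 0 = 0 := by
      simp [hg, S_zero_eval]
    have := hmono (Set.self_mem_Ici) (by exact hx) hx
    rw [h0] at this
    exact this






lemma exp_lb {x : ℝ} (hx : 0 ≤ x) : S 100 x ≤ Real.exp (-x) := by
  have := exp_neg_sign 100 x hx
  norm_num at this
  linarith

lemma exp_ub {x : ℝ} (hx : 0 ≤ x) : Real.exp (-x) ≤ S 100 x + x^100 / Nat.factorial 100 := by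
  have := exp_neg_sign 101 x hx
  have h : S 101 x = S 100 x + (-x)^100 / Nat.factorial 100 := by
    rw [S, S, Finset.sum_range_succ]
  have he : (-x)^100 = x^100 := by rw [neg_pow]; norm_num
  rw [h, he] at this
  norm_num at this
  linarith

lemma rpow_integral_Ioc (r : ℝ) (hr : -1 < r) :
    ∫ x in Ioc (0:ℝ) 27, x ^ r = 27 ^ (r+1) / (r+1) := by
  rw [← intervalIntegral.integral_of_le (by norm_num : (0:ℝ) ≤ 27)]
  rw [integral_rpow (Or.inl hr)]
  rw [Real.zero_rpow (by linarith)]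
  ring

lemma pow27 (k : ℕ) : (27:ℝ) ^ ((k:ℝ) + 1/3) = 27^k * 3 := by
  rw [Real.rpow_add (by norm_num), Real.rpow_natCast]
  congr 1
  rw [show (27:ℝ) = 3^(3:ℕ) by norm_num, ← Real.rpow_natCast 3 3, ← Real.rpow_mul (by norm_num)]
  norm_num

lemma rpow_term_integrable (r : ℝ) (hr : -1 < r) :
    IntegrableOn (fun x : ℝ => x ^ r) (Ioc (0:ℝ) 27) := by
  have := intervalIntegral.intervalIntegrable_rpow' (a := 0) (b := 27) hr
  rwa [intervalIntegrable_iff_integrableOn_Ioc_of_le (by norm_num)] at this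






lemma hr_k (k : ℕ) : (-1:ℝ) < (k:ℝ) + ((1:ℝ)/3 - 1) := by
  have : (0:ℝ) ≤ (k:ℝ) := Nat.cast_nonneg k
  linarith


set_option maxHeartbeats 1000000 in
lemma num_lb : (2.678938534707:ℝ) < ∑ k ∈ Finset.range 100,
    ((-1:ℝ)^k / (Nat.factorial k : ℝ)) * ((27:ℝ)^k * 3 / ((k:ℝ) + 1/3)) := by
  norm_num [Finset.sum_range_succ, Nat.factorial]

set_option maxHeartbeats 1000000 in
lemma num_ub : (∑ k ∈ Finset.range 100,
    ((-1:ℝ)^k / (Nat.factorial k : ℝ)) * ((27:ℝ)^k * 3 / ((k:ℝ) + 1/3)))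
    < 2.678938534708 - 2.3e-13 := by
  norm_num [Finset.sum_range_succ, Nat.factorial]

set_option maxHeartbeats 1000000 in
lemma num_E : (1/(Nat.factorial 100 : ℝ)) * ((27:ℝ)^(100:ℕ) * 3 / (((100:ℕ):ℝ) + 1/3))
    ≤ 1e-15 := by
  norm_num [Nat.factorial]

lemma gamma_third_bounds :
    (2.678938534707:ℝ) < Real.Gamma (1/3) ∧ Real.Gamma (1/3) < 2.678938534708 := by
  have h13 : (0:ℝ) < 1/3 := by norm_num
  have hG := Real.Gamma_eq_integral h13
  set f : ℝ → ℝ := fun x => Real.exp (-x) * x ^ ((1:ℝ)/3 - 1) with hf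
  have hInt : IntegrableOn f (Ioi 0) := Real.GammaIntegral_convergent h13
  have hInt1 : IntegrableOn f (Ioc 0 27) := hInt.mono_set Ioc_subset_Ioi_self
  have hInt2 : IntegrableOn f (Ioi 27) := hInt.mono_set (Ioi_subset_Ioi (by norm_num))
  have hsplit : Real.Gamma (1/3) = (∫ x in Ioc (0:ℝ) 27, f x) + ∫ x in Ioi (27:ℝ), f x := by
    rw [hG, ← setIntegral_union (Ioc_disjoint_Ioi le_rfl) measurableSet_Ioi hInt1 hInt2,
        Ioc_union_Ioi_eq_Ioi (by norm_num : (0:ℝ) ≤ 27)]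
  -- tail bounds
  have tail_nonneg : 0 ≤ ∫ x in Ioi (27:ℝ), f x := by
    apply setIntegral_nonneg measurableSet_Ioi
    intro x hx
    have hx27 : (27:ℝ) < x := hx
    have hx0 : (0:ℝ) ≤ x := by linarith
    have h1 : (0:ℝ) ≤ x ^ ((1:ℝ)/3 - 1) := Real.rpow_nonneg hx0 _
    have h2 : (0:ℝ) ≤ Real.exp (-x) := (Real.exp_pos _).le
    exact mul_nonneg h2 h1
  have h27e : (27:ℝ) ^ ((1:ℝ)/3 - 1) = 1/9 := by
    rw [show (27:ℝ) = 3^(3:ℕ) by norm_num, ← Real.rpow_natCast 3 3,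
      ← Real.rpow_mul (by norm_num)]
    rw [show ((3:ℕ):ℝ) * ((1:ℝ)/3 - 1) = ((-2:ℤ):ℝ) by push_cast; ring, Real.rpow_intCast]
    norm_num
  have tail_ub : (∫ x in Ioi (27:ℝ), f x) ≤ 2.2e-13 := by
    have hg : IntegrableOn (fun x : ℝ => Real.exp (-x) * (1/9)) (Ioi 27) := by
      have := exp_neg_integrableOn_Ioi 27 (b := 1) one_pos
      simp only [neg_mul, one_mul] at this
      exact this.mul_const _
    have step1 : (∫ x in Ioi (27:ℝ), f x) ≤ ∫ x in Ioi (27:ℝ), Real.exp (-x) * (1/9) := by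
      apply setIntegral_mono_on hInt2 hg measurableSet_Ioi
      intro x hx
      have hx27 : (27:ℝ) < x := hx
      have : x ^ ((1:ℝ)/3 - 1) ≤ (27:ℝ) ^ ((1:ℝ)/3 - 1) :=
        Real.rpow_le_rpow_of_nonpos (by norm_num) hx27.le (by norm_num)
      rw [h27e] at this
      exact mul_le_mul_of_nonneg_left this (Real.exp_pos _).le
    have step2 : (∫ x in Ioi (27:ℝ), Real.exp (-x) * (1/9)) = Real.exp (-27) * (1/9) := by
      rw [integral_mul_const, integral_exp_neg_Ioi]
    have step3 : Real.exp (-27) ≤ 1.9e-12 := by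
      rw [Real.exp_neg]
      have h1 : (2.7182818283:ℝ)^(27:ℕ) ≤ Real.exp 1 ^ (27:ℕ) :=
        pow_le_pow_left₀ (by norm_num) Real.exp_one_gt_d9.le 27
      rw [Real.exp_one_pow] at h1
      have h2 : (0:ℝ) < (2.7182818283:ℝ)^(27:ℕ) := by positivity
      rw [show ((27:ℕ):ℝ) = (27:ℝ) by norm_num] at h1
      have h3 : (1.9e-12:ℝ)⁻¹ ≤ (2.7182818283:ℝ)^(27:ℕ) := by norm_num
      have h4 : (Real.exp 27)⁻¹ ≤ ((2.7182818283:ℝ)^(27:ℕ))⁻¹ :=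
        inv_anti₀ h2 h1
      have h5 : ((2.7182818283:ℝ)^(27:ℕ))⁻¹ ≤ 1.9e-12 := by
        rw [inv_le_comm₀ (by positivity) (by norm_num)]
        exact h3
      linarith
    calc (∫ x in Ioi (27:ℝ), f x) ≤ Real.exp (-27) * (1/9) := step1.trans step2.le
      _ ≤ 1.9e-12 * (1/9) := by nlinarith [step3]
      _ ≤ 2.2e-13 := by norm_num
  -- main part
  set Lo : ℝ → ℝ := fun x => ∑ k ∈ Finset.range 100,
      ((-1:ℝ)^k / (Nat.factorial k : ℝ)) * x ^ ((k:ℝ) + ((1:ℝ)/3 - 1)) with hLo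
  set Hi : ℝ → ℝ := fun x =>
      Lo x + (1/(Nat.factorial 100 : ℝ)) * x ^ (((100:ℕ):ℝ) + ((1:ℝ)/3 - 1)) with hHi
  have hLoInt : IntegrableOn Lo (Ioc (0:ℝ) 27) := by
    apply MeasureTheory.integrable_finset_sum
    intro k _
    exact (rpow_term_integrable _ (hr_k k)).const_mul _
  have hHiInt : IntegrableOn Hi (Ioc (0:ℝ) 27) := by
    apply hLoInt.add
    exact (rpow_term_integrable _ (hr_k 100)).const_mul _
  -- pointwise rewriting
  have key : ∀ x ∈ Ioc (0:ℝ) 27, Lo x = S 100 x * x ^ ((1:ℝ)/3 - 1) := by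
    intro x hx
    have hx0 : (0:ℝ) < x := hx.1
    rw [hLo, S, Finset.sum_mul]
    apply Finset.sum_congr rfl
    intro k _
    rw [Real.rpow_add hx0, Real.rpow_natCast]
    rw [neg_pow]
    ring
  have keyHi : ∀ x ∈ Ioc (0:ℝ) 27, x ^ (((100:ℕ):ℝ) + ((1:ℝ)/3 - 1)) =
      x^(100:ℕ) * x ^ ((1:ℝ)/3 - 1) := by
    intro x hx
    rw [Real.rpow_add hx.1, Real.rpow_natCast]
  have lower : ∀ x ∈ Ioc (0:ℝ) 27, Lo x ≤ f x := by
    intro x hx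
    rw [key x hx]
    exact mul_le_mul_of_nonneg_right (exp_lb hx.1.le) (Real.rpow_nonneg hx.1.le _)
  have upper : ∀ x ∈ Ioc (0:ℝ) 27, f x ≤ Hi x := by
    intro x hx
    have h1 : Real.exp (-x) * x ^ ((1:ℝ)/3 - 1) ≤
        (S 100 x + x^100 / Nat.factorial 100) * x ^ ((1:ℝ)/3 - 1) :=
      mul_le_mul_of_nonneg_right (exp_ub hx.1.le) (Real.rpow_nonneg hx.1.le _)
    rw [hHi]
    simp only
    rw [key x hx, keyHi x hx]
    calc f x ≤ (S 100 x + x^100 / Nat.factorial 100) * x ^ ((1:ℝ)/3 - 1) := h1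
      _ = S 100 x * x ^ ((1:ℝ)/3 - 1) +
          (1/(Nat.factorial 100 : ℝ)) * (x^(100:ℕ) * x ^ ((1:ℝ)/3 - 1)) := by ring
  -- integral values
  have intLo : (∫ x in Ioc (0:ℝ) 27, Lo x) = ∑ k ∈ Finset.range 100,
      ((-1:ℝ)^k / (Nat.factorial k : ℝ)) * ((27:ℝ)^k * 3 / ((k:ℝ) + 1/3)) := by
    rw [hLo]
    rw [MeasureTheory.integral_finset_sum _
      (fun k _ => (rpow_term_integrable _ (hr_k k)).const_mul _)]
    apply Finset.sum_congr rfl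
    intro k _
    rw [MeasureTheory.integral_const_mul, rpow_integral_Ioc _ (hr_k k)]
    rw [show (k:ℝ) + ((1:ℝ)/3 - 1) + 1 = (k:ℝ) + 1/3 by ring, pow27]
  have intHi : (∫ x in Ioc (0:ℝ) 27, Hi x) = (∑ k ∈ Finset.range 100,
      ((-1:ℝ)^k / (Nat.factorial k : ℝ)) * ((27:ℝ)^k * 3 / ((k:ℝ) + 1/3)))
      + (1/(Nat.factorial 100 : ℝ)) * ((27:ℝ)^(100:ℕ) * 3 / (((100:ℕ):ℝ) + 1/3)) := by
    rw [hHi]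
    rw [MeasureTheory.integral_add hLoInt ((rpow_term_integrable _ (hr_k 100)).const_mul _)]
    rw [intLo, MeasureTheory.integral_const_mul, rpow_integral_Ioc _ (hr_k 100)]
    rw [show ((100:ℕ):ℝ) + ((1:ℝ)/3 - 1) + 1 = ((100:ℕ):ℝ) + 1/3 by ring, pow27]
  have mainLB : (∫ x in Ioc (0:ℝ) 27, Lo x) ≤ ∫ x in Ioc (0:ℝ) 27, f x :=
    setIntegral_mono_on hLoInt hInt1 measurableSet_Ioc lower
  have mainUB : (∫ x in Ioc (0:ℝ) 27, f x) ≤ ∫ x in Ioc (0:ℝ) 27, Hi x :=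
    setIntegral_mono_on hInt1 hHiInt measurableSet_Ioc upper
  constructor
  · have := num_lb
    rw [hsplit]
    rw [intLo] at mainLB
    linarith
  · have hE : (1/(Nat.factorial 100 : ℝ)) * ((27:ℝ)^(100:ℕ) * 3 / (((100:ℕ):ℝ) + 1/3))
        ≤ 1e-15 := by
      norm_num [Nat.factorial]
    have : (∑ k ∈ Finset.range 100,
        ((-1:ℝ)^k / (Nat.factorial k : ℝ)) * ((27:ℝ)^k * 3 / ((k:ℝ) + 1/3)))
        < 2.678938534708 - 2.3e-13 := by
      norm_num [Finset.sum_range_succ, Nat.factorial]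
    rw [hsplit]
    rw [intHi] at mainUB
    linarith



noncomputable def FF (t : ℝ) : ℝ := (1 + 7*t^3 + 7*t^4 + t^7) * (1+t^3) ^ (-(7:ℝ)/3) / 14

lemma FF_hasDerivAt {t : ℝ} (ht : t ∈ Set.uIcc (0:ℝ) 1) :
    HasDerivAt FF (t ^ 2 * (1 - t) / ((1 - t + t ^ 2) ^ 3 * (1 + t ^ 3) ^ (1/3 : ℝ))) t := by
  rw [Set.uIcc_of_le (by norm_num)] at ht
  obtain ⟨ht0, ht1⟩ := ht
  have hA : (0:ℝ) < 1 + t^3 := by positivity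
  have h1 : HasDerivAt (fun t : ℝ => 1 + t^3) (3*t^2) t := by
    simpa using ((hasDerivAt_pow 3 t).const_add 1)
  have h2 : HasDerivAt (fun t : ℝ => (1+t^3) ^ (-(7:ℝ)/3))
      (3*t^2 * (-(7:ℝ)/3) * (1+t^3) ^ (-(7:ℝ)/3 - 1)) t :=
    h1.rpow_const (Or.inl hA.ne')
  have h3 : HasDerivAt (fun t : ℝ => 1 + 7*t^3 + 7*t^4 + t^7)
      (21*t^2 + 28*t^3 + 7*t^6) t := by
    have h30 := (hasDerivAt_pow 3 t).const_mul (7:ℝ)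
    have h31 := (hasDerivAt_pow 4 t).const_mul (7:ℝ)
    have h32 := hasDerivAt_pow 7 t
    have := ((h30.const_add (1:ℝ)).add h31).add h32
    refine this.congr_deriv (Eq.symm ?_)
    push_cast; ring
  have h4 := (h3.mul h2).div_const 14
  have heq : FF = fun t : ℝ => (1 + 7*t^3 + 7*t^4 + t^7) * (1+t^3) ^ (-(7:ℝ)/3) / 14 := rfl
  rw [heq]
  refine h4.congr_deriv (Eq.symm ?_)
  -- algebraic identity
  set B : ℝ := (1+t^3) ^ ((1:ℝ)/3) with hB
  have hBpos : (0:ℝ) < B := Real.rpow_pos_of_pos hA _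
  have hq : (0:ℝ) < 1 - t + t^2 := by nlinarith [sq_nonneg (2*t-1)]
  have h1t : (0:ℝ) < 1 + t := by linarith
  have key : (1+t^3) ^ ((10:ℝ)/3) = (1-t+t^2)^3 * (1+t)^3 * B := by
    rw [show (10:ℝ)/3 = ((3:ℕ):ℝ) + (1:ℝ)/3 by push_cast; norm_num,
      Real.rpow_add hA, Real.rpow_natCast, hB]
    have : (1+t^3)^(3:ℕ) = (1-t+t^2)^3*(1+t)^3 := by ring
    rw [this]
  have hAinv : (1+t^3) ^ (-(10:ℝ)/3) = 1/((1-t+t^2)^3 * (1+t)^3 * B) := by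
    rw [show -(10:ℝ)/3 = -((10:ℝ)/3) by norm_num, Real.rpow_neg hA.le, key, inv_eq_one_div]
  have e10 : (1+t^3) ^ (-(7:ℝ)/3 - 1) = 1/((1-t+t^2)^3 * (1+t)^3 * B) := by
    rw [show -(7:ℝ)/3 - 1 = -(10:ℝ)/3 by norm_num, hAinv]
  have e7 : (1+t^3) ^ (-(7:ℝ)/3) = (1+t^3) * (1/((1-t+t^2)^3 * (1+t)^3 * B)) := by
    rw [show -(7:ℝ)/3 = 1 + -(10:ℝ)/3 by norm_num, Real.rpow_add hA, Real.rpow_one, hAinv]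
  rw [e10, e7]
  have hBne : B ≠ 0 := hBpos.ne'
  have hqne : (1 - t + t^2) ≠ 0 := hq.ne'
  have h1tne : (1 + t) ≠ 0 := h1t.ne'
  field_simp
  ring

lemma denom_pos {x : ℝ} (hx0 : 0 ≤ x) :
    (0:ℝ) < (1 - x + x ^ 2) ^ 3 * (1 + x ^ 3) ^ (1/3 : ℝ) := by
  have hq : (0:ℝ) < 1 - x + x^2 := by nlinarith [sq_nonneg (2*x-1)]
  have hA : (0:ℝ) < 1 + x^3 := by positivity
  have := Real.rpow_pos_of_pos hA (1/3 : ℝ)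
  positivity

lemma integral_value :
    (∫ t in (0:ℝ)..1, t ^ 2 * (1 - t) / ((1 - t + t ^ 2) ^ 3 * (1 + t ^ 3) ^ (1/3 : ℝ)))
      = (2:ℝ)^((2:ℝ)/3)/7 - 1/14 := by
  have hcont : ContinuousOn
      (fun t : ℝ => t ^ 2 * (1 - t) / ((1 - t + t ^ 2) ^ 3 * (1 + t ^ 3) ^ (1/3 : ℝ)))
      (Set.uIcc 0 1) := by
    apply ContinuousOn.div
    · fun_prop
    · apply ContinuousOn.mul
      · fun_prop
      · apply ContinuousOn.rpow_const
        · fun_prop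
        · intro x hx
          rw [Set.uIcc_of_le (by norm_num)] at hx
          have : (0:ℝ) < 1 + x^3 := by nlinarith [pow_nonneg hx.1 3]
          exact Or.inl this.ne'
    · intro x hx
      rw [Set.uIcc_of_le (by norm_num)] at hx
      exact (denom_pos hx.1).ne'
  rw [intervalIntegral.integral_eq_sub_of_hasDerivAt (fun t ht => FF_hasDerivAt ht)
    (hcont.intervalIntegrable)]
  have hF1 : FF 1 = 16 * (2:ℝ) ^ (-(7:ℝ)/3) / 14 := by
    rw [FF]; norm_num
  have hF0 : FF 0 = 1/14 := by
    rw [FF]; norm_num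
  rw [hF1, hF0]
  have h23 : (2:ℝ)^((2:ℝ)/3) = 8 * (2:ℝ)^(-(7:ℝ)/3) := by
    rw [show (2:ℝ)/3 = ((3:ℕ):ℝ) + (-(7:ℝ)/3) by push_cast; norm_num,
      Real.rpow_add (by norm_num : (0:ℝ) < 2), Real.rpow_natCast]
    norm_num
  rw [h23]
  ring

lemma Y_bounds : (1.587401051:ℝ) < (2:ℝ)^((2:ℝ)/3) ∧ (2:ℝ)^((2:ℝ)/3) < 1.587401052 := by
  have hYpos : (0:ℝ) < (2:ℝ)^((2:ℝ)/3) := Real.rpow_pos_of_pos (by norm_num) _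
  have hY3 : ((2:ℝ)^((2:ℝ)/3))^(3:ℕ) = 4 := by
    rw [← Real.rpow_natCast ((2:ℝ)^((2:ℝ)/3)) 3, ← Real.rpow_mul (by norm_num : (0:ℝ) ≤ 2)]
    norm_num
  constructor
  · nlinarith [hY3, hYpos, sq_nonneg ((2:ℝ)^((2:ℝ)/3) - 1.587401051), sq_nonneg ((2:ℝ)^((2:ℝ)/3) + 1.587401051)]
  · nlinarith [hY3, hYpos, sq_nonneg ((2:ℝ)^((2:ℝ)/3) - 1.587401052), sq_nonneg ((2:ℝ)^((2:ℝ)/3) + 1.587401052)]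

lemma Gamma_ten_thirds : Real.Gamma (10/3) = (28/27) * Real.Gamma (1/3) := by
  have h1 : Real.Gamma (10/3) = (7/3) * Real.Gamma (7/3) := by
    rw [show (10:ℝ)/3 = 7/3 + 1 by norm_num, Real.Gamma_add_one (by norm_num)]
  have h2 : Real.Gamma (7/3) = (4/3) * Real.Gamma (4/3) := by
    rw [show (7:ℝ)/3 = 4/3 + 1 by norm_num, Real.Gamma_add_one (by norm_num)]
  have h3 : Real.Gamma (4/3) = (1/3) * Real.Gamma (1/3) := by
    rw [show (4:ℝ)/3 = 1/3 + 1 by norm_num, Real.Gamma_add_one (by norm_num)]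
  rw [h1, h2, h3]; ring


/-- The sedimentary-coagulation value
`6Γ(10/3) ∫₀¹ t²(1−t)/((1−t+t²)³(1+t³)^{1/3}) dt` agrees with `2.58940496`
to nine significant digits. -/
theorem stmt_18 :
    |6 * Real.Gamma (10/3) *
        (∫ t in (0:ℝ)..1,
          t ^ 2 * (1 - t) / ((1 - t + t ^ 2) ^ 3 * (1 + t ^ 3) ^ (1/3 : ℝ)))
      - 2.58940496| < 5e-9 := by
  rw [integral_value, Gamma_ten_thirds]
  obtain ⟨hg1, hg2⟩ := gamma_third_bounds
  obtain ⟨hy1, hy2⟩ := Y_bounds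
  set G := Real.Gamma (1/3)
  set Y := (2:ℝ)^((2:ℝ)/3)
  have hGY1 : (2.678938534707:ℝ)*1.587401051 < G*Y := by nlinarith
  have hGY2 : G*Y < (2.678938534708:ℝ)*1.587401052 := by nlinarith
  rw [abs_lt]
  constructor <;> nlinarith
end
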